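/- arXiv:2504.19379 — 3 statements merged into one kernel-verified Lean document; each statement's English description precedes it below -/
import Mathlib

section
/- Let R be either β or βη. For every n ≥ 0, the term Y_{n+1} is the unique one-step R-reduction of Y_n; that is, Y_n →_R Y_{n+1}, and if Y_n →_R M then M = Y_{n+1}. -/
/-!
Lambda terms over a variable type `V`, intrinsically taken up to
α-equivalence, via the nested-datatype ("presheaf" / well-scoped de Bruijn)
representation: the body of a λ-abstraction is a term over `Option V`,
the bound variable being `none`.
-/

/-- λ-terms over a variable type, up to α-equivalence. -/
inductive Term : Type u → Type (u + 1)
  | var {V : Type u} : V → Term V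
  | app {V : Type u} : Term V → Term V → Term V
  | lam {V : Type u} : Term (Option V) → Term V

namespace Term

/-- Renaming of (free) variables. -/
def map : {V : Type u} → {W : Type v} → (V → W) → Term V → Term W
  | _, _, f, var v => var (f v)
  | _, _, f, app M N => app (map f M) (map f N)
  | _, _, f, lam B => lam (map (Option.map f) B)

/-- Simultaneous (capture-avoiding) substitution. -/
def bind : {V : Type u} → {W : Type v} → (V → Term W) → Term V → Term W
  | _, _, f, var v => f v
  | _, _, f, app M N => app (bind f M) (bind f N)
  | _, _, f, lam B =>
      lam (bind (fun o => Option.elim o (var none) (fun v => map some (f v))) B)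

/-- The set of free variables of a term. -/
def fv : {V : Type u} → Term V → Set V
  | _, var v => {v}
  | _, app M N => fv M ∪ fv N
  | _, lam B => {v | some v ∈ fv B}

open Classical in
/-- Capture-avoiding substitution `M[v := N]`. -/
noncomputable def subst {V : Type u} (M : Term V) (v : V) (N : Term V) : Term V :=
  M.bind (fun u => if u = v then N else var u)

/-- Instantiation of the bound variable of the body of a λ-abstraction. -/
def instantiate {V : Type u} (B : Term (Option V)) (N : Term V) : Term V :=
  B.bind (fun o => Option.elim o N var)

open Classical in
/-- λ-abstraction `λ v. M` over a named variable `v`. -/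
noncomputable def abs {V : Type u} (v : V) (M : Term V) : Term V :=
  lam (M.map (fun u => if u = v then none else some u))

end Term

/-- A term is closed if it has no free variables. -/
def Closed {V : Type u} (M : Term V) : Prop := Term.fv M = ∅

/-- The β relation: `((λv.M)N, M[v := N])`. -/
def Beta {V : Type u} (M N : Term V) : Prop :=
  ∃ B P, M = Term.app (Term.lam B) P ∧ N = Term.instantiate B P

/-- The η relation: `((λv. M v), M)` with `v ∉ FV(M)`. -/
def Eta {V : Type u} (M N : Term V) : Prop :=
  M = Term.lam (Term.app (N.map some) (Term.var none))

/-- The βη relation. -/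
def BetaEta {V : Type u} (M N : Term V) : Prop := Beta M N ∨ Eta M N

/-- One-step `R`-reduction: the least compatible relation containing `R`. -/
inductive Step {V : Type u} (R : Term V → Term V → Prop) : Term V → Term V → Prop
  | base {M N : Term V} : R M N → Step R M N
  | appL {M M' N : Term V} : Step R M M' → Step R (Term.app M N) (Term.app M' N)
  | appR {M N N' : Term V} : Step R N N' → Step R (Term.app M N) (Term.app M N')
  | abs (v : V) {M M' : Term V} : Step R M M' → Step R (Term.abs v M) (Term.abs v M')

/-- `R`-reduction `→→_R`: the least preorder containing one-step `R`-reduction. -/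
def Red {V : Type u} (R : Term V → Term V → Prop) : Term V → Term V → Prop :=
  Relation.ReflTransGen (Step R)

/-- `R`-equivalence `≈_R`: the least equivalence relation containing `→_R`. -/
def REquiv {V : Type u} (R : Term V → Term V → Prop) : Term V → Term V → Prop :=
  Relation.EqvGen (Step R)

/-- A term is `R`-reduced if it admits no one-step `R`-reduction. -/
def Reduced {V : Type u} (R : Term V → Term V → Prop) (M : Term V) : Prop :=
  ¬ ∃ N, Step R M N

/-- `N` is an `R`-normal form of `M`. -/
def IsNormalFormOf {V : Type u} (R : Term V → Term V → Prop) (M N : Term V) : Prop :=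
  Reduced R N ∧ REquiv R M N

/-- The preorder `≤_R`. -/
def LeR {V : Type u} (R : Term V → Term V → Prop) (F G : Term V) : Prop :=
  ∀ N : Term V, Closed N → ∀ N' : Term V,
    IsNormalFormOf R (Term.app F N) N' → IsNormalFormOf R (Term.app G N) N'

/-- `R_{F,y} = R ∪ S_{F,y}` where `S_{F,y} = {(y, F y)}`. -/
def Rfy {V : Type u} (R : Term V → Term V → Prop) (F : Term V) (y : V) :
    Term V → Term V → Prop :=
  fun A B => R A B ∨ (A = Term.var y ∧ B = Term.app F (Term.var y))

/-- Curry's fixed point combinator `Y = λf.(λg.f(gg))(λg.f(gg))`. -/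
def Y {V : Type u} : Term V :=
  Term.lam (Term.app
    (Term.lam (Term.app (Term.var (some none))
      (Term.app (Term.var none) (Term.var none))))
    (Term.lam (Term.app (Term.var (some none))
      (Term.app (Term.var none) (Term.var none)))))

/-- `λg. M (g g)` with `g` fresh. -/
def halfY {V : Type u} (M : Term V) : Term V :=
  Term.lam (Term.app (M.map some) (Term.app (Term.var none) (Term.var none)))

/-- `Y_{M,N} = (λg. M (g g)) (λg. N (g g))` with `g ∉ FV(M) ∪ FV(N)`. -/
def Ypair {V : Type u} (M N : Term V) : Term V := Term.app (halfY M) (halfY N)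

/-- `M^{(n)} N`: `n`-fold application of `M` to `N`. -/
def iterApp {V : Type u} (M : Term V) : ℕ → Term V → Term V
  | 0, N => N
  | n + 1, N => Term.app M (iterApp M n N)

/-- `Y_n = λf. f^{(n)} Y_{f,f}`. -/
def Yn {V : Type u} (n : ℕ) : Term V :=
  Term.lam (iterApp (Term.var none) n (Ypair (Term.var none) (Term.var none)))

/-- `Υ_F = { Y_n F' : F →→_R F', n ≥ 0 } ∪ { Y_{F',F''} : F →→_R F', F →→_R F'' }`. -/
def Upsilon {V : Type u} (R : Term V → Term V → Prop) (F : Term V) : Set (Term V) :=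
  {M | ∃ (n : ℕ) (F' : Term V), Red R F F' ∧ M = Term.app (Yn n) F'} ∪
  {M | ∃ F' F'' : Term V, Red R F F' ∧ Red R F F'' ∧ M = Ypair F' F''}

/-- The extended variable set `Ṽ_F = V ∪ V'_F`, where `V'_F` is a set
disjoint from `V` in bijection with `Υ_F`. -/
def ExtV {V : Type u} (R : Term V → Term V → Prop) (F : Term V) : Type (u + 1) :=
  V ⊕ {K : Term V // K ∈ Upsilon R F}

/-- The realization map `ρ : Λ̃_F → Λ`, substituting `K` for each `v_K ∈ V'_F`. -/
def realize {V : Type u} {R : Term V → Term V → Prop} {F : Term V} :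
    Term (ExtV R F) → Term V :=
  Term.bind (Sum.elim Term.var (fun K => K.1))

/-- The flattening map `φ_y : Λ̃_F → Λ`, substituting `y` for every variable in `V'_F`. -/
def flatten {V : Type u} {R : Term V → Term V → Prop} {F : Term V} (y : V) :
    Term (ExtV R F) → Term V :=
  Term.bind (Sum.elim Term.var (fun _ => Term.var y))

/-- `λx.λy. y (x x y)`. -/
def thetaHalf {V : Type u} : Term V :=
  Term.lam (Term.lam (Term.app (Term.var none)
    (Term.app (Term.app (Term.var (some none)) (Term.var (some none)))
      (Term.var none))))

/-- Turing's fixed point combinator `Θ = (λx.λy.y(xxy))(λx.λy.y(xxy))`. -/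
def Theta {V : Type u} : Term V := Term.app thetaHalf thetaHalf


namespace YnAux

open Term

theorem map_congrFun {V W : Type u} {f g : V → W} (h : f = g) (M : Term V) :
    M.map f = M.map g := by rw [h]

theorem bind_congrFun {V W : Type u} {f g : V → Term W} (h : f = g) (M : Term V) :
    M.bind f = M.bind g := by rw [h]

theorem map_map : ∀ {V : Type u} (M : Term V), ∀ {W W' : Type u} (f : V → W) (g : W → W'),
    (M.map f).map g = M.map (g ∘ f) := by
  intro V M
  induction M with
  | var v => intro W W' f g; rfl
  | app M N ihM ihN => intro W W' f g; simp [Term.map, ihM, ihN]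
  | lam B ih =>
      intro W W' f g
      simp only [Term.map, ih]
      rw [map_congrFun (f := Option.map g ∘ Option.map f) (g := Option.map (g ∘ f))
        (by funext o; cases o <;> rfl)]

theorem map_id' : ∀ {V : Type u} (M : Term V), M.map id = M := by
  intro V M
  induction M with
  | var v => rfl
  | app M N ihM ihN => simp [Term.map, ihM, ihN]
  | lam B ih => simp [Term.map, Option.map_id]; exact ih

theorem bind_map : ∀ {V : Type u} (M : Term V), ∀ {W W' : Type u} (h : V → W) (g : W → Term W'),
    (M.map h).bind g = M.bind (g ∘ h) := by
  intro V M
  induction M with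
  | var v => intro W W' h g; rfl
  | app M N ihM ihN => intro W W' h g; simp [Term.map, Term.bind, ihM, ihN]
  | lam B ih =>
      intro W W' h g
      simp only [Term.map, Term.bind, ih]
      exact congrArg Term.lam (bind_congrFun (by funext o; cases o <;> rfl) B)

theorem map_bind : ∀ {V : Type u} (M : Term V), ∀ {W W' : Type u} (g : V → Term W) (h : W → W'),
    (M.bind g).map h = M.bind (fun v => (g v).map h) := by
  intro V M
  induction M with
  | var v => intro W W' g h; rfl
  | app M N ihM ihN => intro W W' g h; simp [Term.map, Term.bind, ihM, ihN]
  | lam B ih =>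
      intro W W' g h
      simp only [Term.map, Term.bind, ih]
      rw [bind_congrFun (g := fun o => Option.elim o (Term.var none)
        (fun v => Term.map some ((g v).map h)))]
      funext o; cases o with
      | none => rfl
      | some u => simp only [Option.elim, map_map]; exact map_congrFun (by funext x; rfl) _

theorem bind_var : ∀ {V : Type u} (M : Term V), M.bind Term.var = M := by
  intro V M
  induction M with
  | var v => rfl
  | app M N ihM ihN => simp [Term.bind, ihM, ihN]
  | lam B ih =>
      simp only [Term.bind]
      rw [bind_congrFun (g := Term.var) (by funext o; cases o <;> rfl), ih]

end YnAux
namespace YnAux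

open Term

open Classical in
/-- The renaming used by `Term.abs`. -/
noncomputable def sig {V : Type u} (v : V) : V → Option V :=
  fun u => if u = v then none else some u

theorem abs_def {V : Type u} (v : V) (M : Term V) :
    Term.abs v M = Term.lam (M.map (sig v)) := rfl

noncomputable def tau {V : Type u} (v : V) : Option V → V :=
  fun o => Option.elim o v (fun u => u)

theorem tau_sig {V : Type u} (v : V) : tau v ∘ sig v = id := by
  funext u
  by_cases h : u = v <;> simp [sig, tau, h]

theorem map_sig_injective {V : Type u} (v : V) {M N : Term V}
    (h : M.map (sig v) = N.map (sig v)) : M = N := by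
  have := congrArg (Term.map (tau v)) h
  rwa [map_map, map_map, tau_sig, map_id', map_id'] at this

theorem instantiate_body {V : Type u} (f N : Term V) :
    Term.instantiate (Term.app (f.map some)
      (Term.app (Term.var none) (Term.var none))) N = Term.app f (Term.app N N) := by
  simp only [Term.instantiate, Term.bind, bind_map]
  rw [bind_congrFun (g := Term.var) (by funext u; rfl), bind_var]
  rfl

theorem map_instantiate {V W : Type u} (f : V → W) (B : Term (Option V)) (N : Term V) :
    (Term.instantiate B N).map f
      = Term.instantiate (B.map (Option.map f)) (N.map f) := by
  simp only [Term.instantiate, map_bind, bind_map]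
  exact bind_congrFun (by funext o; cases o <;> rfl) B

theorem map_abs {V W : Type u} (f : V → W) (hf : Function.Injective f) (v : V) (M : Term V) :
    (Term.abs v M).map f = Term.abs (f v) (M.map f) := by
  simp only [abs_def, Term.map, map_map]
  refine congrArg Term.lam (map_congrFun ?_ M)
  funext u
  by_cases h : u = v
  · simp [sig, h]
  · have : f u ≠ f v := fun hc => h (hf hc)
    simp [sig, h, this]

theorem map_halfY {V W : Type u} (f : V → W) (M : Term V) :
    (halfY M).map f = halfY (M.map f) := by
  simp only [halfY, Term.map, map_map]
  rw [map_congrFun (f := Option.map f ∘ some) (g := some ∘ f) (by funext x; rfl) M,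
    ← map_map]
  rfl

/-- One-step reduction is preserved by injective renaming. -/
theorem step_map {V W : Type u} (f : V → W) (hf : Function.Injective f)
    {R : Term V → Term V → Prop} {R' : Term W → Term W → Prop}
    (hRR : (R = @Beta V ∧ R' = @Beta W) ∨ (R = @BetaEta V ∧ R' = @BetaEta W))
    {M M' : Term V} (h : Step R M M') : Step R' (M.map f) (M'.map f) := by
  induction h with
  | base hb =>
      have hbeta : ∀ {A A' : Term V}, Beta A A' → Step R' (A.map f) (A'.map f) := by
        intro A A' hB
        obtain ⟨B, P, rfl, rfl⟩ := hB
        refine Step.base ?_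
        have : Beta ((Term.app (Term.lam B) P).map f) ((Term.instantiate B P).map f) :=
          ⟨B.map (Option.map f), P.map f, rfl, map_instantiate f B P⟩
        rcases hRR with ⟨_, rfl⟩ | ⟨_, rfl⟩
        · exact this
        · exact Or.inl this
      have heta : ∀ {A A' : Term V}, Eta A A' → Eta (A.map f) (A'.map f) := by
        intro A A' hE
        rw [hE]
        show Term.lam _ = _
        simp only [Term.map, map_map]
        rw [map_congrFun (f := Option.map f ∘ some) (g := some ∘ f) (by funext x; rfl) A',
          ← map_map]
        rfl
      rcases hRR with ⟨hR, hR'⟩ | ⟨hR, hR'⟩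
      · subst hR; subst hR'; exact hbeta hb
      · subst hR; subst hR'
        rcases hb with hb | hb
        · exact hbeta hb
        · exact Step.base (Or.inr (heta hb))
  | appL _ ih => exact Step.appL ih
  | appR _ ih => exact Step.appR ih
  | abs v _ ih => rw [map_abs f hf, map_abs f hf]; exact Step.abs (f v) ih

end YnAux
namespace YnAux

open Term

theorem noStep_var {V : Type u} {R : Term V → Term V → Prop}
    (hR : R = @Beta V ∨ R = @BetaEta V) (a : V) (M : Term V) :
    ¬ Step R (Term.var a) M := by
  intro h
  generalize hS : Term.var a = S at h
  cases h with
  | base hb =>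
      rcases hR with rfl | rfl
      · obtain ⟨B, P, hE, _⟩ := hb; rw [← hS] at hE; cases hE
      · rcases hb with ⟨B, P, hE, _⟩ | hE <;> rw [← hS] at hE <;> cases hE
  | appL h' => cases hS
  | appR h' => cases hS
  | abs v h' => rw [abs_def] at hS; cases hS

theorem sig_injective {V : Type u} (v : V) : Function.Injective (sig v) :=
  Function.LeftInverse.injective (g := tau v) (fun x => congrFun (tau_sig v) x)

theorem noStep_rigid {V : Type u} {R : Term V → Term V → Prop}
    (hR : R = @Beta V ∨ R = @BetaEta V) (a b c : V) (M : Term V) :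
    ¬ Step R (Term.app (Term.var a) (Term.app (Term.var b) (Term.var c))) M := by
  intro h
  generalize hS : Term.app (Term.var a) (Term.app (Term.var b) (Term.var c)) = S at h
  cases h with
  | base hb =>
      rcases hR with rfl | rfl
      · obtain ⟨B, P, hE, _⟩ := hb; rw [← hS] at hE; cases hE
      · rcases hb with ⟨B, P, hE, _⟩ | hE <;> rw [← hS] at hE <;> cases hE
  | appL h' => cases hS; exact noStep_var hR a _ h'
  | appR h' =>
      cases hS
      generalize hT : Term.app (Term.var b) (Term.var c) = T at h'
      cases h' with
      | base hb =>
          rcases hR with rfl | rfl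
          · obtain ⟨B, P, hE, _⟩ := hb; rw [← hT] at hE; cases hE
          · rcases hb with ⟨B, P, hE, _⟩ | hE <;> rw [← hT] at hE <;> cases hE
      | appL h'' => cases hT; exact noStep_var hR b _ h''
      | appR h'' => cases hT; exact noStep_var hR c _ h''
      | abs v h'' => rw [abs_def] at hT; cases hT
  | abs v h' => rw [abs_def] at hS; cases hS

theorem noStep_halfY_var {V : Type u} {R : Term V → Term V → Prop}
    (hR : R = @Beta V ∨ R = @BetaEta V) (v : V) (M : Term V) :
    ¬ Step R (halfY (Term.var v)) M := by
  intro h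
  generalize hS : halfY (Term.var v) = S at h
  cases h with
  | base hb =>
      rcases hR with rfl | rfl
      · obtain ⟨B, P, hE, _⟩ := hb; rw [← hS] at hE; cases hE
      · rcases hb with ⟨B, P, hE, _⟩ | hE
        · rw [← hS] at hE; cases hE
        · rw [← hS] at hE
          simp only [halfY, Term.map] at hE
          -- body : app (var (some v)) (app (var none) (var none)) = app (map some N) (var none)
          injection hE with _ hE1
          injection hE1 with _ _ hE3
          cases hE3
  | appL h' => rw [halfY] at hS; cases hS
  | appR h' => rw [halfY] at hS; cases hS
  | abs w h' =>
      rw [abs_def, halfY] at hS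
      injection hS with _ hB
      rcases hR with rfl | rfl
      · have h2 := step_map (sig w) (sig_injective w) (Or.inl ⟨rfl, rfl⟩) h'
        rw [← hB] at h2
        exact noStep_rigid (Or.inl rfl) (some v) none none _ h2
      · have h2 := step_map (sig w) (sig_injective w) (Or.inr ⟨rfl, rfl⟩) h'
        rw [← hB] at h2
        exact noStep_rigid (Or.inr rfl) (some v) none none _ h2

end YnAux
namespace YnAux

open Term

/-- `f^{(n)} Y_{f,f}` with `f = var v`. -/
def Mn {V : Type u} (v : V) (n : ℕ) : Term V :=
  iterApp (Term.var v) n (Ypair (Term.var v) (Term.var v))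

theorem beta_sub {V : Type u} {R : Term V → Term V → Prop}
    (hR : R = @Beta V ∨ R = @BetaEta V) {A B : Term V} (h : Beta A B) : R A B := by
  rcases hR with rfl | rfl
  · exact h
  · exact Or.inl h

theorem step_Ypair {V : Type u} {R : Term V → Term V → Prop}
    (hR : R = @Beta V ∨ R = @BetaEta V) (f : Term V) :
    Step R (Ypair f f) (Term.app f (Ypair f f)) :=
  Step.base (beta_sub hR ⟨Term.app (f.map some) (Term.app (Term.var none) (Term.var none)),
    halfY f, rfl, (instantiate_body f (halfY f)).symm⟩)

theorem step_iterApp {V : Type u} {R : Term V → Term V → Prop} (f : Term V)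
    {X X' : Term V} (h : Step R X X') (n : ℕ) :
    Step R (iterApp f n X) (iterApp f n X') := by
  induction n with
  | zero => exact h
  | succ m ih => exact Step.appR ih

theorem iterApp_succ_inner {V : Type u} (f X : Term V) (n : ℕ) :
    iterApp f n (Term.app f X) = iterApp f (n + 1) X := by
  induction n with
  | zero => rfl
  | succ m ih => show Term.app f _ = Term.app f _; rw [ih]

theorem step_Mn {V : Type u} {R : Term V → Term V → Prop}
    (hR : R = @Beta V ∨ R = @BetaEta V) (v : V) (n : ℕ) :
    Step R (Mn v n) (Mn v (n + 1)) := by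
  have h := step_iterApp (Term.var v) (step_Ypair hR (Term.var v)) n
  rwa [iterApp_succ_inner] at h

theorem map_Ypair {V W : Type u} (f : V → W) (A B : Term V) :
    (Ypair A B).map f = Ypair (A.map f) (B.map f) := by
  rw [show (Ypair A B).map f = Term.app ((halfY A).map f) ((halfY B).map f) from rfl,
    map_halfY, map_halfY]
  rfl

theorem abs_Mn {V : Type u} (v : V) (n : ℕ) : Term.abs v (Mn v n) = Yn n := by
  rw [abs_def, Yn]
  refine congrArg Term.lam ?_
  have hv : (Term.var v).map (sig v) = Term.var (none : Option V) := by
    show Term.var (sig v v) = _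
    simp [sig]
  induction n with
  | zero =>
      show (Ypair (Term.var v) (Term.var v)).map (sig v) = _
      rw [map_Ypair, hv]
      rfl
  | succ m ih =>
      show Term.app ((Term.var v).map (sig v)) ((Mn v m).map (sig v))
        = Term.app (Term.var none)
            (iterApp (Term.var none) m (Ypair (Term.var none) (Term.var none)))
      rw [hv, ih]

theorem uniq_Mn {V : Type u} {R : Term V → Term V → Prop}
    (hR : R = @Beta V ∨ R = @BetaEta V) (v : V) :
    ∀ (n : ℕ) (M : Term V), Step R (Mn v n) M → M = Mn v (n + 1) := by
  intro n
  induction n with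
  | zero =>
      intro M h
      generalize hS : Mn v 0 = S at h
      rw [show Mn v 0 = Term.app (halfY (Term.var v)) (halfY (Term.var v)) from rfl] at hS
      cases h with
      | base hb =>
          have hbeta : Beta (Term.app (halfY (Term.var v)) (halfY (Term.var v))) M →
              M = Mn v 1 := by
            intro ⟨B, P, hE, hM⟩
            subst hM
            injection hE with _ h1 h2
            injection h1 with _ hB
            rw [← h2, ← hB]
            exact instantiate_body _ _
          rw [← hS] at hb
          rcases hR with rfl | rfl
          · exact hbeta hb
          · rcases hb with hb | hb
            · exact hbeta hb
            · cases hb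
      | appL h' =>
          injection hS with _ h1 h2
          subst h1
          exact absurd h' (noStep_halfY_var hR v _)
      | appR h' =>
          injection hS with _ h1 h2
          subst h2
          exact absurd h' (noStep_halfY_var hR v _)
      | abs w h' => rw [abs_def] at hS; cases hS
  | succ m ih =>
      intro M h
      generalize hS : Mn v (m + 1) = S at h
      rw [show Mn v (m + 1) = Term.app (Term.var v) (Mn v m) from rfl] at hS
      cases h with
      | base hb =>
          rw [← hS] at hb
          have : ∀ {N : Term V}, ¬ Beta (Term.app (Term.var v) (Mn v m)) N := by
            intro N ⟨B, P, hE, _⟩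
            injection hE with _ h1 h2
            cases h1
          rcases hR with rfl | rfl
          · exact absurd hb this
          · rcases hb with hb | hb
            · exact absurd hb this
            · cases hb
      | appL h' =>
          injection hS with _ h1 h2
          subst h1
          exact absurd h' (noStep_var hR v _)
      | appR h' =>
          injection hS with _ h1 h2
          subst h1
          subst h2
          rw [ih _ h']
          rfl
      | abs w h' => rw [abs_def] at hS; cases hS

end YnAux
/-- Let `R` be β or βη. For every `n ≥ 0`, the term `Y_{n+1}`
is the unique one-step `R`-reduction of `Y_n`. -/
theorem Yn_unique_step {V : Type} [Infinite V]
    (R : Term V → Term V → Prop) (hR : R = @Beta V ∨ R = @BetaEta V)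
    (n : ℕ) :
    Step R (Yn n) (Yn (n + 1)) ∧
      ∀ M : Term V, Step R (Yn n) M → M = Yn (n + 1) := by
  open YnAux in
  obtain ⟨v⟩ : Nonempty V := inferInstance
  constructor
  · have h := Step.abs v (step_Mn hR v n)
    rwa [abs_Mn, abs_Mn] at h
  · intro M h
    generalize hS : Yn n = S at h
    rw [show (Yn n : Term V) = Term.lam (iterApp (Term.var none) n
      (Ypair (Term.var none) (Term.var none))) from rfl] at hS
    cases h with
    | base hb =>
        rw [← hS] at hb
        have hnotbeta : ∀ {N : Term V}, ¬ Beta (Term.lam (iterApp (Term.var none) n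
            (Ypair (Term.var none) (Term.var none)))) N := by
          intro N ⟨B, P, hE, _⟩
          cases hE
        rcases hR with rfl | rfl
        · exact absurd hb hnotbeta
        · rcases hb with hb | hb
          · exact absurd hb hnotbeta
          · -- Eta case
            injection hb with _ hE
            cases n with
            | zero =>
                injection hE with _ h1 h2
                cases h2
            | succ m =>
                injection hE with _ h1 h2
                cases m with
                | zero => cases h2
                | succ k => cases h2
    | appL h' => cases hS
    | appR h' => cases hS
    | abs w h' =>
        rw [← show (Yn n : Term V) = Term.lam (iterApp (Term.var none) n
          (Ypair (Term.var none) (Term.var none))) from rfl, ← abs_Mn w n, abs_def, abs_def] at hS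
        injection hS with _ hB
        have hM0 := map_sig_injective w hB
        subst hM0
        rw [uniq_Mn hR w n _ h']
        exact abs_Mn w (n + 1)
end

section
/- Let R be either β or βη and fix a λ-term F. For any term M with variables in Ṽ_F = V ∪ V'_F, if ρ(M) is R-reduced, then M contains no free variables from V'_F (so M = ρ(M) is an ordinary λ-term). -/
/-! ### Auxiliary lemmas -/

namespace Term

theorem fv_finite : ∀ {W : Type v} (M : Term W), (fv M).Finite
  | _, var v => Set.finite_singleton v
  | _, app M N => (fv_finite M).union (fv_finite N)
  | _, lam B => (fv_finite B).preimage (Option.some_injective _).injOn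

theorem bind_congr : ∀ {W : Type v} {X : Type w} (M : Term W) (f g : W → Term X),
    (∀ x ∈ fv M, f x = g x) → bind f M = bind g M
  | _, _, var v, f, g, h => h v rfl
  | _, _, app M N, f, g, h => by
      simp only [bind]
      rw [bind_congr M f g (fun x hx => h x (Or.inl hx)),
          bind_congr N f g (fun x hx => h x (Or.inr hx))]
  | _, _, lam B, f, g, h => by
      simp only [bind]
      congr 1
      refine bind_congr B _ _ ?_
      rintro (_ | x) hx
      · rfl
      · simp only [Option.elim]
        rw [h x hx]

theorem bind_var : ∀ {W : Type v} (M : Term W), bind var M = M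
  | _, var v => rfl
  | _, app M N => by simp only [bind]; rw [bind_var M, bind_var N]
  | _, lam B => by
      simp only [bind]
      congr 1
      rw [bind_congr B _ var (by rintro (_ | x) _ <;> rfl), bind_var B]

theorem map_map : ∀ {U : Type u'} {W : Type v} {X : Type w} (M : Term U)
    (f : U → W) (g : W → X), map g (map f M) = map (g ∘ f) M
  | _, _, _, var v, f, g => rfl
  | _, _, _, app M N, f, g => by
      simp only [map]; rw [map_map M, map_map N]
  | _, _, _, lam B, f, g => by
      simp only [map]
      rw [map_map B]
      exact congrArg (fun h => lam (map h B)) (funext fun o => by cases o <;> rfl)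

theorem bind_map : ∀ {U : Type u'} {W : Type v} {X : Type w} (M : Term U)
    (f : U → W) (g : W → Term X), bind g (map f M) = bind (g ∘ f) M
  | _, _, _, var v, f, g => rfl
  | _, _, _, app M N, f, g => by
      simp only [map, bind]; rw [bind_map M, bind_map N]
  | _, _, _, lam B, f, g => by
      simp only [map, bind]
      rw [bind_map B]
      exact congrArg (fun h => lam (bind h B)) (funext fun o => by cases o <;> rfl)

theorem map_bind : ∀ {U : Type u'} {W : Type v} {X : Type w} (M : Term U)
    (f : U → Term W) (g : W → X), map g (bind f M) = bind (fun x => map g (f x)) M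
  | _, _, _, var v, f, g => rfl
  | _, _, _, app M N, f, g => by
      simp only [map, bind]; rw [map_bind M, map_bind N]
  | _, _, _, lam B, f, g => by
      simp only [map, bind]
      rw [map_bind B]
      refine congrArg (fun h => lam (bind h B)) (funext fun o => ?_)
      cases o with
      | none => rfl
      | some x =>
        simp only [Option.elim]
        rw [map_map, map_map]
        rfl

theorem bind_bind : ∀ {U : Type u'} {W : Type v} {X : Type w} (M : Term U)
    (f : U → Term W) (g : W → Term X),
    bind g (bind f M) = bind (fun x => bind g (f x)) M
  | _, _, _, var v, f, g => rfl
  | _, _, _, app M N, f, g => by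
      simp only [bind]; rw [bind_bind M, bind_bind N]
  | _, _, _, lam B, f, g => by
      simp only [bind]
      rw [bind_bind B]
      refine congrArg (fun h => lam (bind h B)) (funext fun o => ?_)
      cases o with
      | none => rfl
      | some x =>
        simp only [Option.elim]
        rw [bind_map, map_bind]
        rfl

/-- `λ B = λ v. (B[none := v])` for any `v` not occurring (under `some`) in `B`. -/
theorem lam_eq_abs {V : Type} (B : Term (Option V)) (v : V)
    (hv : ∀ u, some u ∈ fv B → u ≠ v) :
    lam B = abs v (instantiate B (var v)) := by
  unfold abs instantiate
  rw [map_bind]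
  congr 1
  refine ((bind_congr B _ var ?_).trans (bind_var B)).symm
  rintro (_ | u) hu
  · simp [map, Option.elim]
  · simp [map, Option.elim, hv u hu]

end Term

/-- If `f x` admits a one-step reduction for some free variable `x` of `M`,
then `bind f M` admits a one-step reduction. -/
theorem steppable_bind {V : Type} [Infinite V] (R : Term V → Term V → Prop) :
    ∀ {W : Type v} (M : Term W) (f : W → Term V) (x : W), x ∈ Term.fv M →
      (∃ N, Step R (f x) N) → ∃ N, Step R (Term.bind f M) N := by
  intro W M
  induction M with
  | var w =>
    intro f x hx hs
    rcases hx with rfl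
    exact hs
  | app A B ihA ihB =>
    intro f x hx hs
    rcases hx with hx | hx
    · obtain ⟨N, hN⟩ := ihA f x hx hs
      exact ⟨_, Step.appL hN⟩
    · obtain ⟨N, hN⟩ := ihB f x hx hs
      exact ⟨_, Step.appR hN⟩
  | lam B ih =>
    intro f x hx hs
    -- `bind f (lam B) = lam B'` with `B' = bind f' B`
    set f' : Option _ → Term (Option V) :=
      fun o => Option.elim o (Term.var none) (fun w => Term.map some (f w)) with hf'
    have hbody : Term.bind f (Term.lam B) = Term.lam (Term.bind f' B) := rfl
    -- choose a fresh `v`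
    have hfin : ({u : V | some u ∈ Term.fv (Term.bind f' B)}).Finite :=
      (Term.fv_finite _).preimage (Option.some_injective _).injOn
    obtain ⟨v, hv⟩ := hfin.infinite_compl.nonempty
    -- instantiate the body at `var v`
    set g : Option _ → Term V := fun o => Option.elim o (Term.var v) f with hg
    have hinst : Term.instantiate (Term.bind f' B) (Term.var v) = Term.bind g B := by
      unfold Term.instantiate
      rw [Term.bind_bind]
      refine Term.bind_congr B _ _ ?_
      rintro (_ | u) _
      · rfl
      · simp only [hf', Option.elim, hg]
        rw [Term.bind_map]
        exact Term.bind_var _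
    have habs : Term.bind f (Term.lam B) = Term.abs v (Term.bind g B) := by
      rw [hbody, Term.lam_eq_abs (Term.bind f' B) v (fun u hu hne => hv (hne ▸ hu)), hinst]
    obtain ⟨N, hN⟩ := ih g (some x) hx hs
    exact ⟨_, habs ▸ Step.abs v hN⟩

/-- Every element of `Υ_F` admits a one-step reduction. -/
theorem upsilon_steppable {V : Type} (R : Term V → Term V → Prop)
    (hR : R = @Beta V ∨ R = @BetaEta V) (F : Term V) (K : Term V)
    (hK : K ∈ Upsilon R F) : ∃ N, Step R K N := by
  have hbeta : ∀ (B : Term (Option V)) (P : Term V),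
      ∃ N, Step R (Term.app (Term.lam B) P) N := by
    intro B P
    refine ⟨Term.instantiate B P, Step.base ?_⟩
    have hb : Beta (Term.app (Term.lam B) P) (Term.instantiate B P) :=
      ⟨B, P, rfl, rfl⟩
    rcases hR with rfl | rfl
    · exact hb
    · exact Or.inl hb
  rcases hK with ⟨n, F', _, rfl⟩ | ⟨F', F'', _, _, rfl⟩
  · exact hbeta _ _
  · exact hbeta _ _

/-- Let `R` be β or βη and fix a λ-term `F`. For any term `M`
over `Ṽ_F = V ∪ V'_F`, if `ρ(M)` is `R`-reduced, then `M` contains no free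
variables from `V'_F`. -/
theorem no_primed_fv_of_realize_reduced {V : Type} [Infinite V]
    (R : Term V → Term V → Prop) (hR : R = @Beta V ∨ R = @BetaEta V)
    (F : Term V) (M : Term (ExtV R F))
    (h : Reduced R (realize M)) :
    ∀ x ∈ Term.fv M, ∃ v : V, x = Sum.inl v := by
  rintro (v | K) hx
  · exact ⟨v, rfl⟩
  · exfalso
    exact h (steppable_bind R M (Sum.elim Term.var (fun K => K.1)) (Sum.inr K) hx
      (upsilon_steppable R hR F K.1 K.2))
end

section
/- Let R be either β or βη and fix a λ-term F. Let Υ'_F = { Θ' F' : Θ →→_R Θ', F →→_R F' }, where Θ is Turing's fixed point combinator. If M ∈ Υ'_F and M →_R M', then M' = (F')^{(n)} N for some λ-term F' with F →→_R F', some N ∈ Υ'_F, and some n ≥ 0. -/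
/-- `Υ'_F = { Θ' F' : Θ →→_R Θ', F →→_R F' }`. -/
def UpsilonTheta {V : Type u} (R : Term V → Term V → Prop) (F : Term V) :
    Set (Term V) :=
  {M | ∃ T' F' : Term V, Red R Theta T' ∧ Red R F F' ∧ M = Term.app T' F'}
section Aux
universe u
open Term

theorem map_map' : ∀ {V : Type u} (M : Term V) {W X : Type u} (f : V → W) (g : W → X),
    Term.map g (Term.map f M) = Term.map (g ∘ f) M := by
  intro V M
  induction M with
  | var v => intro W X f g; rfl
  | app A B ihA ihB => intro W X f g; simp [Term.map, ihA, ihB]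
  | lam B ih =>
      intro W X f g
      simp only [Term.map, ih]
      rw [show (Option.map g ∘ Option.map f) = Option.map (g ∘ f) by funext o; cases o <;> rfl]

theorem map_congr' : ∀ {V : Type u} (M : Term V) {W : Type u} (f g : V → W),
    (∀ v ∈ Term.fv M, f v = g v) → Term.map f M = Term.map g M := by
  intro V M
  induction M with
  | var v => intro W f g h; simp [Term.map, h v (by simp [Term.fv])]
  | app A B ihA ihB =>
      intro W f g h
      simp only [Term.map]
      rw [ihA _ _ (fun v hv => h v (Or.inl hv)), ihB _ _ (fun v hv => h v (Or.inr hv))]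
  | lam B ih =>
      intro W f g h
      simp only [Term.map]
      rw [ih (Option.map f) (Option.map g)]
      rintro (_|v) hv
      · rfl
      · simp [h v hv]

theorem map_id' : ∀ {V : Type u} (M : Term V) (f : V → V), (∀ v, f v = v) → Term.map f M = M := by
  intro V M
  induction M with
  | var v => intro f h; simp [Term.map, h]
  | app A B ihA ihB => intro f h; simp [Term.map, ihA _ h, ihB _ h]
  | lam B ih =>
      intro f h
      simp only [Term.map]
      rw [ih]
      rintro (_|v) <;> simp [h]

theorem bind_map' : ∀ {V : Type u} (M : Term V) {W X : Type u} (f : V → W) (g : W → Term X),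
    Term.bind g (Term.map f M) = Term.bind (g ∘ f) M := by
  intro V M
  induction M with
  | var v => intro W X f g; rfl
  | app A B ihA ihB => intro W X f g; simp [Term.map, Term.bind, ihA, ihB]
  | lam B ih =>
      intro W X f g
      simp only [Term.map, Term.bind, ih]
      rw [show ((fun o => Option.elim o (Term.var none) (fun v => Term.map some (g v))) ∘ Option.map f)
          = (fun o => Option.elim o (Term.var none) (fun v => Term.map some ((g ∘ f) v))) by
        funext o; cases o <;> rfl]

theorem bind_var' : ∀ {V : Type u} (M : Term V) (f : V → Term V), (∀ v, f v = Term.var v) → Term.bind f M = M := by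
  intro V M
  induction M with
  | var v => intro f h; exact h v
  | app A B ihA ihB => intro f h; simp [Term.bind, ihA _ h, ihB _ h]
  | lam B ih =>
      intro f h
      simp only [Term.bind]
      rw [ih]
      rintro (_|v)
      · rfl
      · simp only [Option.elim, h v]; rfl

theorem mem_fv_map : ∀ {V : Type u} (M : Term V) {W : Type u} (f : V → W) (w : W),
    w ∈ Term.fv (Term.map f M) ↔ ∃ v ∈ Term.fv M, f v = w := by
  intro V M
  induction M with
  | var v => intro W f w; simp [Term.map, Term.fv, eq_comm]
  | app A B ihA ihB =>
      intro W f w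
      simp only [Term.map, Term.fv, Set.mem_union, ihA, ihB]
      constructor
      · rintro (⟨v, hv, rfl⟩ | ⟨v, hv, rfl⟩) <;> exact ⟨v, by tauto, rfl⟩
      · rintro ⟨v, hv | hv, rfl⟩
        · exact Or.inl ⟨v, hv, rfl⟩
        · exact Or.inr ⟨v, hv, rfl⟩
  | lam B ih =>
      intro W f w
      simp only [Term.map, Term.fv, Set.mem_setOf_eq, ih]
      constructor
      · rintro ⟨(_|v), hv, hev⟩
        · exact absurd hev (by simp)
        · exact ⟨v, hv, by simpa using hev⟩
      · rintro ⟨v, hv, rfl⟩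
        exact ⟨some v, hv, rfl⟩

theorem mem_fv_bind : ∀ {V : Type u} (M : Term V) {W : Type u} (f : V → Term W) (w : W),
    w ∈ Term.fv (Term.bind f M) → ∃ v ∈ Term.fv M, w ∈ Term.fv (f v) := by
  intro V M
  induction M with
  | var v => intro W f w h; exact ⟨v, by simp [Term.fv], h⟩
  | app A B ihA ihB =>
      intro W f w h
      rcases h with h | h
      · obtain ⟨v, hv, hw⟩ := ihA _ _ h; exact ⟨v, Or.inl hv, hw⟩
      · obtain ⟨v, hv, hw⟩ := ihB _ _ h; exact ⟨v, Or.inr hv, hw⟩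
  | lam B ih =>
      intro W f w h
      obtain ⟨o, ho, hw⟩ := ih _ _ h
      cases o with
      | none => simp [Term.fv] at hw
      | some v =>
          simp only [Option.elim] at hw
          rw [mem_fv_map] at hw
          obtain ⟨u, hu, he⟩ := hw
          cases he
          exact ⟨v, ho, hu⟩

end Aux
section Aux2
universe u
variable {V : Type u}

theorem fv_beta {M N : Term V} (h : Beta M N) : Term.fv N ⊆ Term.fv M := by
  obtain ⟨B, P, rfl, rfl⟩ := h
  intro w hw
  obtain ⟨o, ho, hwo⟩ := mem_fv_bind B _ w hw
  cases o with
  | none => exact Or.inr hwo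
  | some u =>
      simp only [Option.elim, Term.fv, Set.mem_singleton_iff] at hwo
      subst hwo
      exact Or.inl ho

theorem fv_eta {M N : Term V} (h : Eta M N) : Term.fv N ⊆ Term.fv M := by
  subst h
  intro w hw
  simp only [Term.fv, Set.mem_setOf_eq, Set.mem_union]
  exact Or.inl ((mem_fv_map N some (some w)).2 ⟨w, hw, rfl⟩)

theorem fv_abs (v : V) (M : Term V) (w : V) :
    w ∈ Term.fv (Term.abs v M) ↔ w ∈ Term.fv M ∧ w ≠ v := by
  simp only [Term.abs, Term.fv, Set.mem_setOf_eq, mem_fv_map]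
  constructor
  · rintro ⟨u, hu, he⟩
    by_cases h : u = v
    · simp [h] at he
    · simp only [if_neg h] at he
      injection he with he'
      subst he'
      exact ⟨hu, h⟩
  · rintro ⟨hw, hne⟩
    exact ⟨w, hw, by simp [if_neg hne]⟩

theorem step_fv {R : Term V → Term V → Prop}
    (hsub : ∀ {A B : Term V}, R A B → Beta A B ∨ Eta A B)
    {M N : Term V} (h : Step R M N) : Term.fv N ⊆ Term.fv M := by
  induction h with
  | base hr => rcases hsub hr with h | h
               · exact fv_beta h
               · exact fv_eta h
  | appL _ ih => intro w hw; rcases hw with hw | hw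
                 · exact Or.inl (ih hw)
                 · exact Or.inr hw
  | appR _ ih => intro w hw; rcases hw with hw | hw
                 · exact Or.inl hw
                 · exact Or.inr (ih hw)
  | abs v _ ih =>
      intro w hw
      rw [fv_abs] at hw ⊢
      exact ⟨ih hw.1, hw.2⟩

theorem red_fv {R : Term V → Term V → Prop}
    (hsub : ∀ {A B : Term V}, R A B → Beta A B ∨ Eta A B)
    {M N : Term V} (h : Red R M N) : Term.fv N ⊆ Term.fv M := by
  induction h with
  | refl => exact fun _ hw => hw
  | tail _ hstep ih => exact fun w hw => ih (step_fv hsub hstep hw)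

theorem theta_fv : Term.fv (Theta : Term V) = ∅ := by
  ext v
  simp [Theta, thetaHalf, Term.fv]

-- computations
theorem map_iterApp {W : Type u} (f : V → W) (A : Term V) (k : ℕ) (B : Term V) :
    Term.map f (iterApp A k B) = iterApp (Term.map f A) k (Term.map f B) := by
  induction k with
  | zero => rfl
  | succ k ih => simp [iterApp, Term.map, ih]

theorem instantiate_mapsome (X : Term V) (N : Term V) :
    Term.instantiate (Term.map some X) N = X := by
  unfold Term.instantiate
  rw [bind_map']
  exact bind_var' X _ (fun v => rfl)

theorem instantiate_iter (k : ℕ) (T : Term V) (N : Term V) :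
    Term.instantiate (iterApp (Term.var none) k (Term.app (Term.map some T) (Term.var none))) N
      = iterApp N k (Term.app T N) := by
  induction k with
  | zero => show Term.app (Term.instantiate (Term.map some T) N) _ = _
            rw [instantiate_mapsome]; rfl
  | succ k ih =>
      show Term.app (Term.instantiate (Term.var none) N) _ = _
      show Term.app N (Term.instantiate _ N) = _
      rw [ih]; rfl

open Classical in
theorem map_unname (v : V) (M : Term V) :
    Term.map (fun o : Option V => o.getD v)
      (Term.map (fun u => if u = v then none else some u) M) = M := by
  rw [map_map']
  apply map_id'
  intro u
  by_cases h : u = v <;> simp [h]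

end Aux2
section Aux3
universe u
variable {V : Type u} {R : Term V → Term V → Prop}

theorem step_cases {M N : Term V} (h : Step R M N) :
    R M N ∨
    (∃ A A' B, M = Term.app A B ∧ N = Term.app A' B ∧ Step R A A') ∨
    (∃ A B B', M = Term.app A B ∧ N = Term.app A B' ∧ Step R B B') ∨
    (∃ v P P', M = Term.abs v P ∧ N = Term.abs v P' ∧ Step R P P') := by
  cases h with
  | base hr => exact Or.inl hr
  | appL h => exact Or.inr (Or.inl ⟨_, _, _, rfl, rfl, h⟩)
  | appR h => exact Or.inr (Or.inr (Or.inl ⟨_, _, _, rfl, rfl, h⟩))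
  | abs v h => exact Or.inr (Or.inr (Or.inr ⟨_, _, _, rfl, rfl, h⟩))

theorem step_var_elim (hsub : ∀ {A B : Term V}, R A B → Beta A B ∨ Eta A B)
    {v : V} {N : Term V} (h : Step R (Term.var v) N) : False := by
  rcases step_cases h with hr | ⟨A, A', B, hEq, _⟩ | ⟨A, B, B', hEq, _⟩ | ⟨w, P, P', hEq, _⟩
  · rcases hsub hr with ⟨B, P, hEq, _⟩ | hEq
    · exact Term.noConfusion rfl (heq_of_eq hEq)
    · exact Term.noConfusion rfl (heq_of_eq hEq)
  · exact Term.noConfusion rfl (heq_of_eq hEq)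
  · exact Term.noConfusion rfl (heq_of_eq hEq)
  · simp only [Term.abs] at hEq; exact Term.noConfusion rfl (heq_of_eq hEq)

open Classical in
theorem step_lam_inv (hsub : ∀ {A B : Term V}, R A B → Beta A B ∨ Eta A B)
    {B : Term (Option V)} {N : Term V} (h : Step R (Term.lam B) N) :
    (B = Term.app (Term.map some N) (Term.var none)) ∨
    (∃ (v : V) (P P' : Term V),
      B = Term.map (fun u => if u = v then none else some u) P ∧
      N = Term.abs v P' ∧ Step R P P') := by
  rcases step_cases h with hr | ⟨A, A', C, hEq, _⟩ | ⟨A, C, C', hEq, _⟩ | ⟨w, P, P', hEq, hN, hs⟩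
  · rcases hsub hr with ⟨B', P, hEq, _⟩ | hEq
    · exact Term.noConfusion rfl (heq_of_eq hEq)
    · injection hEq with hV h1; exact Or.inl h1
  · exact Term.noConfusion rfl (heq_of_eq hEq)
  · exact Term.noConfusion rfl (heq_of_eq hEq)
  · simp only [Term.abs] at hEq
    injection hEq with hV h1
    exact Or.inr ⟨w, P, P', h1, hN, hs⟩

theorem step_app_inv {A B N : Term V} (h : Step R (Term.app A B) N) :
    R (Term.app A B) N ∨
    (∃ A', N = Term.app A' B ∧ Step R A A') ∨
    (∃ B', N = Term.app A B' ∧ Step R B B') := by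
  rcases step_cases h with hr | ⟨A₀, A', B₀, hEq, hN, hs⟩ | ⟨A₀, B₀, B', hEq, hN, hs⟩ |
      ⟨w, P, P', hEq, _⟩
  · exact Or.inl hr
  · injection hEq with hV h1 h2
    subst h1; subst h2; exact Or.inr (Or.inl ⟨A', hN, hs⟩)
  · injection hEq with hV h1 h2
    subst h1; subst h2; exact Or.inr (Or.inr ⟨B', hN, hs⟩)
  · simp only [Term.abs] at hEq; exact Term.noConfusion rfl (heq_of_eq hEq)

theorem map_some_ne_varnone {X : Term V} (h : Term.map some X = Term.var none) : False := by
  cases X <;> simp [Term.map] at h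

theorem step_appvar_inv (hsub : ∀ {A B : Term V}, R A B → Beta A B ∨ Eta A B)
    {a : V} {X N : Term V} (h : Step R (Term.app (Term.var a) X) N) :
    ∃ X', N = Term.app (Term.var a) X' ∧ Step R X X' := by
  rcases step_app_inv h with hr | ⟨A', _, hs⟩ | ⟨X', hN, hs⟩
  · rcases hsub hr with ⟨B', P, hEq, _⟩ | hEq
    · injection hEq with hV h1 h2; exact absurd h1 (fun h => Term.noConfusion rfl (heq_of_eq h))
    · exact Term.noConfusion rfl (heq_of_eq hEq)
  · exact absurd hs (step_var_elim hsub)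
  · exact ⟨X', hN, hs⟩

theorem step_varvar_elim (hsub : ∀ {A B : Term V}, R A B → Beta A B ∨ Eta A B)
    {a b : V} {N : Term V}
    (h : Step R (Term.app (Term.var a) (Term.var b)) N) : False := by
  obtain ⟨X', _, hs⟩ := step_appvar_inv hsub h
  exact step_var_elim hsub hs

theorem thetaHalf_nostep (hsub : ∀ {A B : Term V}, R A B → Beta A B ∨ Eta A B)
    {N : Term V} (h : Step R thetaHalf N) : False := by
  rcases step_lam_inv hsub h with hEq | ⟨v, P, P', hEq, _, hs⟩
  · exact Term.noConfusion rfl (heq_of_eq hEq)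
  · have hP := congrArg (Term.map (fun o : Option V => o.getD v)) hEq
    rw [map_unname] at hP
    simp only [Term.map, Option.map, Option.getD] at hP
    subst hP
    rcases step_lam_inv hsub hs with hEq2 | ⟨w, Q, Q', hEq2, _, hs2⟩
    · injection hEq2 with hV h1 h2
      exact map_some_ne_varnone h1.symm
    · have hQ := congrArg (Term.map (fun o : Option V => o.getD w)) hEq2
      rw [map_unname] at hQ
      simp only [Term.map, Option.map, Option.getD] at hQ
      subst hQ
      obtain ⟨X', _, hs3⟩ := step_appvar_inv hsub hs2
      rcases step_app_inv hs3 with hr | ⟨A', _, hs4⟩ | ⟨B', _, hs4⟩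
      · rcases hsub hr with ⟨B', P₀, hEq3, _⟩ | hEq3
        · injection hEq3 with hV h1 h2; exact Term.noConfusion rfl (heq_of_eq h1)
        · exact Term.noConfusion rfl (heq_of_eq hEq3)
      · exact step_varvar_elim hsub hs4
      · exact step_var_elim hsub hs4

end Aux3
section Aux4
universe u

/-- Shapes of reducts of `Theta`. -/
inductive TRed {V : Type u} (R : Term V → Term V → Prop) : Term V → Prop
  | theta : TRed R Theta
  | tail (m : ℕ) (T : Term V) : TRed R T → Red R Theta T →
      TRed R (Term.lam (iterApp (Term.var none) (m + 1)
        (Term.app (Term.map some T) (Term.var none))))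

variable {V : Type u} {R : Term V → Term V → Prop}

theorem theta_beta_compute :
    Term.instantiate
      (Term.lam (Term.app (Term.var none)
        (Term.app (Term.app (Term.var (some none)) (Term.var (some none)))
          (Term.var none)))) (thetaHalf : Term V)
    = Term.lam (iterApp (Term.var none) 1
        (Term.app (Term.map some Theta) (Term.var none))) := rfl

theorem inner_lemma (hsub : ∀ {A B : Term V}, R A B → Beta A B ∨ Eta A B)
    {v : V} {T : Term V} (hT : TRed R T) (hRed : Red R Theta T)
    (ih : ∀ U, Step R T U → TRed R U) :
    ∀ (m : ℕ) (P : Term V),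
      Step R (iterApp (Term.var v) (m + 1) (Term.app T (Term.var v))) P →
      ∃ (k : ℕ) (T' : Term V), TRed R T' ∧ Red R Theta T' ∧
        P = iterApp (Term.var v) (k + 1) (Term.app T' (Term.var v)) := by
  intro m
  induction m with
  | zero =>
      intro P h
      obtain ⟨P₀, rfl, hs⟩ := step_appvar_inv hsub h
      rcases step_app_inv hs with hr | ⟨T', hN, hs'⟩ | ⟨X', _, hs'⟩
      · rcases hsub hr with ⟨B, Q, hEq, hP₀⟩ | hEq
        · injection hEq with hV h1 h2
          subst h2
          cases hT with
          | theta => exact absurd h1 (fun h => Term.noConfusion rfl (heq_of_eq h))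
          | tail j T₂ hT₂ hRed₂ =>
              injection h1 with hV' h1'
              subst h1'
              rw [instantiate_iter] at hP₀
              subst hP₀
              exact ⟨j + 1, T₂, hT₂, hRed₂, rfl⟩
        · exact absurd hEq (fun h => Term.noConfusion rfl (heq_of_eq h))
      · subst hN
        exact ⟨0, T', ih T' hs', hRed.tail hs', rfl⟩
      · exact absurd hs' (step_var_elim hsub)
  | succ m ihm =>
      intro P h
      obtain ⟨P₀, rfl, hs⟩ := step_appvar_inv hsub h
      obtain ⟨k, T', h1, h2, h3⟩ := ihm P₀ hs
      exact ⟨k + 1, T', h1, h2, by rw [h3]; rfl⟩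

open Classical in
theorem tred_step (hsub : ∀ {A B : Term V}, R A B → Beta A B ∨ Eta A B)
    {T T' : Term V} (hT : TRed R T) (h : Step R T T') : TRed R T' := by
  induction hT generalizing T' with
  | theta =>
      rcases step_app_inv h with hr | ⟨A', _, hs⟩ | ⟨B', _, hs⟩
      · rcases hsub hr with ⟨B, Q, hEq, hT'⟩ | hEq
        · injection hEq with hV h1 h2
          subst h2
          injection h1 with hV' h1'
          subst h1'
          rw [theta_beta_compute] at hT'
          subst hT'
          exact TRed.tail 0 Theta TRed.theta Relation.ReflTransGen.refl
        · exact absurd hEq (fun h => Term.noConfusion rfl (heq_of_eq h))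
      · exact absurd hs (thetaHalf_nostep hsub)
      · exact absurd hs (thetaHalf_nostep hsub)
  | tail m T hTT hRed ih =>
      rcases step_lam_inv hsub h with hEq | ⟨v, P, P', hEq, hN, hs⟩
      · -- iterApp (var none) (m+1) ... = app (map some T') (var none) : impossible head
        injection hEq with hV h1 h2
        exact absurd h1.symm map_some_ne_varnone
      · have hP := congrArg (Term.map (fun o : Option V => o.getD v)) hEq
        rw [map_unname] at hP
        simp only [map_iterApp, Term.map, map_map', Option.getD_none] at hP
        rw [map_id' T ((fun o : Option V => o.getD v) ∘ some) (fun u => rfl)] at hP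
        subst hP
        obtain ⟨k, T'', hT'', hRed'', hP'⟩ :=
          inner_lemma hsub hTT hRed (fun U hU => ih hU) m P' hs
        subst hN hP'
        have e1 : Term.map (fun u => if u = v then none else some u) (Term.var v)
            = (Term.var none : Term (Option V)) := by
          simp [Term.map]
        have e2 : Term.map (fun u => if u = v then none else some u) T''
            = Term.map some T'' := by
          apply map_congr'
          intro u hu
          have hmem : u ∈ Term.fv (Theta : Term V) := red_fv hsub hRed'' hu
          rw [theta_fv] at hmem
          exact absurd hmem (Set.notMem_empty u)
        have habs : Term.abs v (iterApp (Term.var v) (k + 1)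
            (Term.app T'' (Term.var v)))
            = Term.lam (iterApp (Term.var none) (k + 1)
                (Term.app (Term.map some T'') (Term.var none))) := by
          show Term.lam _ = _
          rw [map_iterApp]
          simp only [Term.map, e1]
          rw [e2]
          simp only [if_pos trivial]
        rw [habs]
        exact TRed.tail k T'' hT'' hRed''

theorem tred_of_red (hsub : ∀ {A B : Term V}, R A B → Beta A B ∨ Eta A B)
    {T : Term V} (h : Red R Theta T) : TRed R T := by
  induction h with
  | refl => exact TRed.theta
  | tail _ hstep ih => exact tred_step hsub ih hstep

end Aux4


/-- Let `R` be β or βη and fix a λ-term `F`. If `M ∈ Υ'_F`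
and `M →_R M'`, then `M' = (F')^{(n)} N` for some `F'` with `F →→_R F'`,
some `N ∈ Υ'_F` and some `n ≥ 0`. -/
theorem upsilonTheta_step {V : Type} [Infinite V]
    (R : Term V → Term V → Prop) (hR : R = @Beta V ∨ R = @BetaEta V)
    (F M M' : Term V) (hM : M ∈ UpsilonTheta R F) (h : Step R M M') :
    ∃ (F' : Term V) (n : ℕ) (N : Term V),
      Red R F F' ∧ N ∈ UpsilonTheta R F ∧ M' = iterApp F' n N := by
  have hsub : ∀ {A B : Term V}, R A B → Beta A B ∨ Eta A B := by
    rcases hR with rfl | rfl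
    · exact fun h => Or.inl h
    · exact fun h => h
  obtain ⟨T, F', hT, hF', rfl⟩ := hM
  rcases step_app_inv h with hr | ⟨T'', hN, hs⟩ | ⟨F'', hN, hs⟩
  · rcases hsub hr with ⟨B, P, hEq, hM'⟩ | hEq
    · injection hEq with hV h1 h2
      subst h2
      have hTB := tred_of_red hsub hT
      rw [h1] at hTB
      cases hTB with
      | tail j T₂ hT₂ hRed₂ =>
          rw [instantiate_iter] at hM'
          exact ⟨F', j + 1, Term.app T₂ F', hF', ⟨T₂, F', hRed₂, hF', rfl⟩, hM'⟩
    · exact absurd hEq (fun he => Term.noConfusion rfl (heq_of_eq he))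
  · exact ⟨F', 0, Term.app T'' F', hF', ⟨T'', F', hT.tail hs, hF', rfl⟩, hN⟩
  · exact ⟨F', 0, Term.app T F'', hF', ⟨T, F'', hT, hF'.tail hs, rfl⟩, hN⟩
end
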